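/- Let y ~ N(ȳ, Σ_y) be a d-dimensional Gaussian with Σ_y positive definite, let σ ∈ ℝ^d be the vector of positive square roots of the diagonal entries of Σ_y, and let β ∈ (0,1). If ȳᵢ + Ψ_d⁻¹(β)·σᵢ ≤ 0 for every coordinate i, where Ψ_d⁻¹(β) = √(Φ_d⁻¹(1−β)) and Φ_d⁻¹ is the chi-squared quantile function with d degrees of freedom, then P(yᵢ ≤ 0 for all i) ≥ 1−β. -/

import Mathlib

open MeasureTheory ProbabilityTheory Matrix Real

noncomputable def mvGaussian {d : ℕ} (m : Fin d → ℝ) (S : Matrix (Fin d) (Fin d) ℝ)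
    (hS : S.PosDef) : Measure (Fin d → ℝ) :=
  (Measure.pi fun _ : Fin d => gaussianReal 0 1).map
    (fun z => m + (hS.posSemidef.1.eigenvectorUnitary.1 *
      diagonal ((RCLike.ofReal : ℝ → ℝ) ∘ (√·) ∘ hS.posSemidef.1.eigenvalues) *
      (star hS.posSemidef.1.eigenvectorUnitary : Matrix (Fin d) (Fin d) ℝ)).mulVec z)

noncomputable def stdNormalCDF (x : ℝ) : ℝ := cdf (gaussianReal 0 1) x

noncomputable def stdNormalQuantile (p : ℝ) : ℝ := Function.invFun stdNormalCDF p

noncomputable def chiSqCDF (d : ℕ) (x : ℝ) : ℝ := cdf (gammaMeasure (d / 2) (1 / 2)) x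

noncomputable def chiSqQuantile (d : ℕ) (p : ℝ) : ℝ := Function.invFun (chiSqCDF d) p

noncomputable def PsiInv (d : ℕ) (β : ℝ) : ℝ := Real.sqrt (chiSqQuantile d (1 - β))

noncomputable def Psi (d : ℕ) (r : ℝ) : ℝ := 1 - chiSqCDF d (r ^ 2)

noncomputable def lambdaMax {d : ℕ} (S : Matrix (Fin d) (Fin d) ℝ) (hS : S.IsHermitian) : ℝ :=
  ⨆ i, hS.eigenvalues i

noncomputable def regIncBeta (a b x : ℝ) : ℝ :=
  (∫ t in (0:ℝ)..x, t ^ (a - 1) * (1 - t) ^ (b - 1)) /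
    (∫ t in (0:ℝ)..1, t ^ (a - 1) * (1 - t) ^ (b - 1))

noncomputable def calI (d : ℕ) (x : ℝ) : ℝ :=
  regIncBeta ((d - 1 : ℝ) / 2) (1 / 2) (Real.sqrt (1 - x))

open scoped ENNReal NNReal

lemma lintegral_pi_prod {μ : Measure ℝ} [SigmaFinite μ] :
    ∀ (d : ℕ) (h : Fin d → ℝ → ℝ≥0∞), (∀ i, Measurable (h i)) →
    ∫⁻ z, ∏ i, h i (z i) ∂(Measure.pi fun _ : Fin d => μ) = ∏ i, ∫⁻ x, h i x ∂μ := by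
  intro d
  induction d with
  | zero =>
      intro h _
      simp [lintegral_const]
  | succ n ih =>
      intro h hm
      have hP := (measurePreserving_piFinSuccAbove (fun _ : Fin (n+1) => μ) 0)
      set e := MeasurableEquiv.piFinSuccAbove (fun _ : Fin (n+1) => ℝ) 0
      have hG : Measurable fun p : ℝ × (Fin n → ℝ) => h 0 p.1 * ∏ j, h j.succ (p.2 j) := by
        apply Measurable.mul ((hm 0).comp measurable_fst)
        exact Finset.measurable_prod _ fun j _ => (hm j.succ).comp ((measurable_pi_apply j).comp measurable_snd)
      have key : ∀ z : Fin (n+1) → ℝ,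
          (∏ i, h i (z i)) = h 0 ((e z).1) * ∏ j, h j.succ ((e z).2 j) := by
        intro z
        rw [Fin.prod_univ_succ]
        rfl
      calc ∫⁻ z, ∏ i, h i (z i) ∂(Measure.pi fun _ : Fin (n+1) => μ)
          = ∫⁻ z, (fun p : ℝ × (Fin n → ℝ) => h 0 p.1 * ∏ j, h j.succ (p.2 j)) (e z)
              ∂(Measure.pi fun _ : Fin (n+1) => μ) := by
            simp_rw [key]
        _ = ∫⁻ p, h 0 p.1 * ∏ j, h j.succ (p.2 j) ∂(μ.prod (Measure.pi fun _ : Fin n => μ)) := by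
            exact hP.lintegral_comp hG
        _ = (∫⁻ x, h 0 x ∂μ) * ∏ j : Fin n, ∫⁻ x, h j.succ x ∂μ := by
            rw [lintegral_prod_mul (f := h 0) (g := fun y : Fin n → ℝ => ∏ j, h j.succ (y j)) ((hm 0).aemeasurable)
              ((Finset.measurable_prod _ fun j _ => (hm j.succ).comp (measurable_pi_apply j)).aemeasurable)]
            rw [ih _ (fun j => hm j.succ)]
        _ = ∏ i, ∫⁻ x, h i x ∂μ := (Fin.prod_univ_succ fun i : Fin (n+1) => ∫⁻ x, h i x ∂μ).symm

lemma pi_gauss (d : ℕ) :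
    Measure.pi (fun _ : Fin d => gaussianReal 0 1) =
      (volume : Measure (Fin d → ℝ)).withDensity
        (fun z => ∏ i, gaussianPDF 0 1 (z i)) := by
  refine Measure.pi_eq fun s hs => ?_
  rw [withDensity_apply _ (MeasurableSet.univ_pi hs)]
  have h1 : ∀ z : Fin d → ℝ,
      (Set.univ.pi s).indicator (fun z => ∏ i, gaussianPDF 0 1 (z i)) z
        = ∏ i, (s i).indicator (gaussianPDF 0 1) (z i) := by
    intro z
    by_cases hz : z ∈ Set.univ.pi s
    · rw [Set.indicator_of_mem hz]
      exact Finset.prod_congr rfl fun i _ =>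
        (Set.indicator_of_mem (hz i (Set.mem_univ i)) _).symm
    · rw [Set.indicator_of_notMem hz]
      rw [Set.mem_univ_pi] at hz
      push_neg at hz
      obtain ⟨i, hi⟩ := hz
      exact (Finset.prod_eq_zero (Finset.mem_univ i)
        (Set.indicator_of_notMem hi _)).symm
  rw [← lintegral_indicator (MeasurableSet.univ_pi hs)]
  simp_rw [h1]
  rw [volume_pi, lintegral_pi_prod d (fun i => (s i).indicator (gaussianPDF 0 1)) (fun i => (measurable_gaussianPDFReal 0 1).ennreal_ofReal.indicator (hs i))]
  refine Finset.prod_congr rfl fun i _ => ?_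
  rw [lintegral_indicator (hs i), gaussianReal_apply 0 one_ne_zero (s i)]


lemma dens_eq (d : ℕ) (x : EuclideanSpace ℝ (Fin d)) :
    ∏ i, gaussianPDFReal 0 1 (x i) = ((Real.sqrt (2*π))⁻¹)^d * Real.exp (-‖x‖^2/2) := by
  have hn : ‖x‖^2 = ∑ i, (x i)^2 := by
    rw [EuclideanSpace.norm_eq, Real.sq_sqrt (by positivity)]
    exact Finset.sum_congr rfl fun i _ => by rw [Real.norm_eq_abs, sq_abs]
  simp only [gaussianPDFReal]
  push_cast
  simp only [mul_one, sub_zero]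
  rw [Finset.prod_mul_distrib, Finset.prod_const, ← Real.exp_sum, hn]
  congr 1
  · simp [Finset.card_univ]
  · congr 1
    rw [← Finset.sum_div]
    congr 1
    rw [← Finset.sum_neg_distrib]

lemma scal_eq (d : ℕ) (hd : 0 < d) (r : ℝ) (hr : 0 < r) :
    |2*r| * gammaPDFReal ((d:ℝ)/2) (1/2) (r^2)
      = (d:ℝ) * ((√π^d / Gamma ((d:ℝ)/2+1)) * (r^(d-1) * (((√(2*π))⁻¹)^d * Real.exp (-r^2/2)))) := by
  have hd2 : (0:ℝ) < (d:ℝ)/2 := by positivity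
  have hΓ : 0 < Gamma ((d:ℝ)/2) := Real.Gamma_pos_of_pos hd2
  rw [gammaPDFReal, if_pos (by positivity)]
  rw [Real.Gamma_add_one hd2.ne']
  have h1 : ((r^2:ℝ)) ^ ((d:ℝ)/2 - 1) = r^d / r^2 := by
    rw [← Real.rpow_natCast r 2, ← Real.rpow_mul hr.le]
    have : ((2:ℕ):ℝ) * ((d:ℝ)/2 - 1) = (d:ℝ) - 2 := by push_cast; ring
    rw [this, Real.rpow_sub hr, Real.rpow_natCast, Real.rpow_two]
    norm_num
  have h2 : ((1:ℝ)/2) ^ ((d:ℝ)/2) = ((√2)⁻¹)^d := by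
    rw [show ((d:ℝ)/2) = ((1:ℝ)/2) * d by ring, Real.rpow_mul (by norm_num : (0:ℝ) ≤ 1/2),
      Real.rpow_natCast]
    congr 1
    rw [← Real.sqrt_eq_rpow, one_div, Real.sqrt_inv]
  have h3 : √(2*π) = √2 * √π := Real.sqrt_mul (by norm_num) π
  have habs : |2*r| = 2*r := abs_of_pos (by positivity)
  have hrd : r^(d-1) * r = r^d := by
    rw [← pow_succ, Nat.sub_add_cancel hd]
  have hs2 : (0:ℝ) < √2 := by positivity
  have hsp : (0:ℝ) < √π := Real.sqrt_pos.mpr Real.pi_pos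
  rw [h1, h2, h3, habs]
  have hE : Real.exp (-(1/2 * r^2)) = Real.exp (-r^2/2) := by ring_nf
  rw [hE, mul_inv, mul_pow]
  field_simp
  rw [← hrd]
  have hπ1 : √π ^ d * (1 / √π) ^ d = 1 := by rw [← mul_pow, mul_one_div_cancel hsp.ne', one_pow]
  linear_combination (-(r * r^(d-1))) * hπ1

lemma chisq_law (d : ℕ) (hd : 0 < d) (t : ℝ) :
    (Measure.pi fun _ : Fin d => gaussianReal 0 1) {z | ∑ i, (z i)^2 ≤ t}
      = gammaMeasure ((d:ℝ)/2) (1/2) (Set.Iic t) := by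
  have hd2 : (0:ℝ) < (d:ℝ)/2 := by positivity
  have hgm : IsProbabilityMeasure (gammaMeasure ((d:ℝ)/2) (1/2)) :=
    isProbabilityMeasure_gammaMeasure hd2 (by norm_num)
  have hSmeas : MeasurableSet {z : Fin d → ℝ | ∑ i, (z i)^2 ≤ t} :=
    measurableSet_le (by fun_prop) measurable_const
  rcases lt_or_ge t 0 with ht | ht
  · -- both zero
    have h1 : {z : Fin d → ℝ | ∑ i, (z i)^2 ≤ t} = ∅ := by
      ext z; simp only [Set.mem_setOf_eq, Set.mem_empty_iff_false, iff_false, not_le]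
      exact lt_of_lt_of_le ht (Finset.sum_nonneg fun i _ => sq_nonneg _)
    have h2 : gammaMeasure ((d:ℝ)/2) (1/2) (Set.Iic t) = 0 := by
      refine le_antisymm ?_ zero_le
      calc gammaMeasure ((d:ℝ)/2) (1/2) (Set.Iic t)
          ≤ gammaMeasure ((d:ℝ)/2) (1/2) (Set.Iio 0) := by
            apply measure_mono; intro x hx; exact lt_of_le_of_lt hx ht
        _ = 0 := by
            rw [gammaMeasure, withDensity_apply _ measurableSet_Iio]
            exact lintegral_gammaPDF_of_nonpos le_rfl
    rw [h1, h2, measure_empty]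
  · -- main case
    haveI : Nonempty (Fin d) := ⟨⟨0, hd⟩⟩
    set E := EuclideanSpace ℝ (Fin d)
    set e := (MeasurableEquiv.toLp 2 (Fin d → ℝ)).symm
    have hme : (volume : Measure (Fin d → ℝ)) = Measure.map e volume :=
      ((EuclideanSpace.volume_preserving_symm_measurableEquiv_toLp (Fin d)).map_eq).symm
    set C : ℝ := ((Real.sqrt (2*π))⁻¹)^d with hC
    have hCpos : 0 < C := by positivity
    -- LHS as lintegral over E
    have hgmeas : Measurable (fun z : Fin d → ℝ => ∏ i, gaussianPDF 0 1 (z i)) :=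
      Finset.measurable_prod _ fun i _ =>
        (measurable_gaussianPDFReal 0 1).ennreal_ofReal.comp (measurable_pi_apply i)
    have step1 : (Measure.pi fun _ : Fin d => gaussianReal 0 1) {z | ∑ i, (z i)^2 ≤ t}
        = ∫⁻ x in e ⁻¹' {z | ∑ i, (z i)^2 ≤ t},
            (fun z => ∏ i, gaussianPDF 0 1 (z i)) (e x) ∂(volume : Measure E) := by
      rw [pi_gauss d, withDensity_apply _ hSmeas, hme,
        setLIntegral_map hSmeas hgmeas e.measurable]
    have hpre : e ⁻¹' {z | ∑ i, (z i)^2 ≤ t} = Metric.closedBall (0:E) (Real.sqrt t) := by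
      ext x
      simp only [Set.mem_preimage, Set.mem_setOf_eq, Metric.mem_closedBall, dist_zero_right]
      have hex : ∀ i, (e x) i = x i := fun i => rfl
      simp_rw [hex]
      have hnorm : ‖x‖^2 = ∑ i, (x i)^2 := by
        rw [EuclideanSpace.norm_eq, Real.sq_sqrt (by positivity)]
        exact Finset.sum_congr rfl fun i _ => by rw [Real.norm_eq_abs, sq_abs]
      constructor
      · intro h
        rw [show Real.sqrt t = Real.sqrt t from rfl]
        have : ‖x‖^2 ≤ t := hnorm ▸ h
        calc ‖x‖ = Real.sqrt (‖x‖^2) := (Real.sqrt_sq (norm_nonneg x)).symm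
          _ ≤ Real.sqrt t := Real.sqrt_le_sqrt this
      · intro h
        have : ‖x‖^2 ≤ Real.sqrt t ^ 2 := by
          exact pow_le_pow_left₀ (norm_nonneg x) h 2
        rw [Real.sq_sqrt ht] at this
        exact hnorm ▸ this
    -- integrand as function of norm
    set f : ℝ → ℝ := fun r => C * Real.exp (-r^2/2) with hf
    set F : ℝ → ℝ := Set.indicator (Set.Iic (Real.sqrt t)) f with hF
    have hfc : Continuous f := by fun_prop
    have hint : ∀ x : E, (fun z => ∏ i, gaussianPDF 0 1 (z i)) (e x)
        = ENNReal.ofReal (C * Real.exp (-‖x‖^2/2)) := by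
      intro x
      have hex : ∀ i, (e x) i = x i := fun i => rfl
      show (∏ i, gaussianPDF 0 1 ((e x) i)) = _
      simp_rw [hex, gaussianPDF]
      rw [← ENNReal.ofReal_prod_of_nonneg (fun i _ => gaussianPDFReal_nonneg 0 1 _), dens_eq d x]
    have step2 : (Measure.pi fun _ : Fin d => gaussianReal 0 1) {z | ∑ i, (z i)^2 ≤ t}
        = ∫⁻ x : E, ENNReal.ofReal (F ‖x‖) ∂(volume : Measure E) := by
      rw [step1, hpre]
      rw [← lintegral_indicator measurableSet_closedBall]
      congr 1
      ext x
      by_cases hx : x ∈ Metric.closedBall (0:E) (Real.sqrt t)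
      · rw [Set.indicator_of_mem hx, hint x, hF,
          Set.indicator_of_mem (by rwa [Metric.mem_closedBall, dist_zero_right] at hx)]
      · rw [Set.indicator_of_notMem hx, hF,
          Set.indicator_of_notMem (by rwa [Metric.mem_closedBall, dist_zero_right] at hx)]
        simp
    -- integrability of the radial profile on E
    have hFE_eq : (fun x : E => F ‖x‖)
        = Set.indicator (Metric.closedBall (0:E) (Real.sqrt t)) (fun x => f ‖x‖) := by
      ext x
      by_cases hx : x ∈ Metric.closedBall (0:E) (Real.sqrt t)
      · rw [Set.indicator_of_mem hx, hF,
          Set.indicator_of_mem (by rwa [Metric.mem_closedBall, dist_zero_right] at hx)]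
      · rw [Set.indicator_of_notMem hx, hF,
          Set.indicator_of_notMem (by rwa [Metric.mem_closedBall, dist_zero_right] at hx)]
    have hFint : Integrable (fun x : E => F ‖x‖) (volume : Measure E) := by
      rw [hFE_eq]
      rw [integrable_indicator_iff measurableSet_closedBall]
      exact ContinuousOn.integrableOn_compact (isCompact_closedBall _ _)
        (hfc.comp continuous_norm).continuousOn
    have hFnonneg : ∀ r : ℝ, 0 ≤ F r := by
      intro r
      rw [hF]
      apply Set.indicator_nonneg
      intro y _
      positivity
    have step3 : (Measure.pi fun _ : Fin d => gaussianReal 0 1) {z | ∑ i, (z i)^2 ≤ t}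
        = ENNReal.ofReal (∫ x : E, F ‖x‖ ∂(volume : Measure E)) := by
      rw [step2, ofReal_integral_eq_lintegral_ofReal hFint (ae_of_all _ fun x => hFnonneg _)]
    -- radial formula
    have hrank : Module.finrank ℝ E = d := finrank_euclideanSpace_fin
    have step4 : ∫ x : E, F ‖x‖ ∂(volume : Measure E)
        = d • ((volume : Measure E) (Metric.ball 0 1)).toReal
            • ∫ r in Set.Ioi (0:ℝ), r ^ (d - 1) • F r := by
      rw [integral_fun_norm_addHaar (volume : Measure E) F, hrank, measureReal_def]
    -- reduce the radial integral to Ioo 0 √t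
    have step5 : ∫ r in Set.Ioi (0:ℝ), r ^ (d - 1) • F r
        = ∫ r in Set.Ioo 0 (Real.sqrt t), r ^ (d - 1) * f r := by
      have : (fun r : ℝ => r ^ (d - 1) • F r)
          = fun r => Set.indicator (Set.Iic (Real.sqrt t)) (fun r => r ^ (d-1) * f r) r := by
        ext r
        by_cases hr : r ∈ Set.Iic (Real.sqrt t)
        · rw [hF, Set.indicator_of_mem hr, Set.indicator_of_mem hr, smul_eq_mul]
        · rw [hF, Set.indicator_of_notMem hr, Set.indicator_of_notMem hr, smul_zero]
      rw [this, setIntegral_indicator measurableSet_Iic, Set.Ioi_inter_Iic,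
        integral_Ioc_eq_integral_Ioo]
    -- gamma side
    have hpdfint : Integrable (gammaPDFReal ((d:ℝ)/2) (1/2)) := by
      refine ⟨(measurable_gammaPDFReal _ _).aestronglyMeasurable, ?_⟩
      have h1 : ∫⁻ x, ‖gammaPDFReal ((d:ℝ)/2) (1/2) x‖ₑ = ∫⁻ x, gammaPDF ((d:ℝ)/2) (1/2) x := by
        congr 1
        ext x
        rw [gammaPDF, ← ofReal_norm, Real.norm_eq_abs,
          abs_of_nonneg (gammaPDFReal_nonneg hd2 (by norm_num) x)]
      rw [HasFiniteIntegral, h1, lintegral_gammaPDF_eq_one hd2 (by norm_num)]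
      exact ENNReal.one_lt_top
    have gside : gammaMeasure ((d:ℝ)/2) (1/2) (Set.Iic t)
        = ENNReal.ofReal (∫ x in Set.Ioo 0 t, gammaPDFReal ((d:ℝ)/2) (1/2) x) := by
      rw [gammaMeasure, withDensity_apply _ measurableSet_Iic]
      have h2 : ∫⁻ x in Set.Iic t, gammaPDF ((d:ℝ)/2) (1/2) x
          = ∫⁻ x in Set.Ioo 0 t, gammaPDF ((d:ℝ)/2) (1/2) x := by
        have hsplit : Set.Iic t = Set.Iic 0 ∪ Set.Ioc 0 t := by
          rw [Set.Iic_union_Ioc_eq_Iic ht]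
        rw [hsplit, lintegral_union measurableSet_Ioc (by
          simp only [Set.disjoint_left, Set.mem_Iic, Set.mem_Ioc]
          intro a ha h'
          linarith [h'.1])]
        have hz : ∫⁻ x in Set.Iic 0, gammaPDF ((d:ℝ)/2) (1/2) x = 0 := by
          rw [← Measure.restrict_congr_set Iio_ae_eq_Iic]
          exact lintegral_gammaPDF_of_nonpos le_rfl
        rw [hz, zero_add, ← Measure.restrict_congr_set Ioo_ae_eq_Ioc]
      rw [h2]
      simp_rw [gammaPDF]
      rw [← ofReal_integral_eq_lintegral_ofReal (hpdfint.restrict)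
        (ae_of_all _ fun x => gammaPDFReal_nonneg hd2 (by norm_num) x)]
    -- change of variables r ↦ r^2
    have himg : (fun r : ℝ => r^2) '' Set.Ioo 0 (Real.sqrt t) = Set.Ioo 0 t := by
      ext y
      constructor
      · rintro ⟨r, ⟨hr0, hrt⟩, rfl⟩
        refine ⟨by positivity, ?_⟩
        have := (Real.lt_sqrt hr0.le).mp hrt
        exact this
      · rintro ⟨hy0, hyt⟩
        refine ⟨Real.sqrt y, ⟨Real.sqrt_pos.mpr hy0, Real.sqrt_lt_sqrt hy0.le hyt⟩,
          Real.sq_sqrt hy0.le⟩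
    have hcov : ∫ x in Set.Ioo 0 t, gammaPDFReal ((d:ℝ)/2) (1/2) x
        = ∫ r in Set.Ioo 0 (Real.sqrt t), |2*r| • gammaPDFReal ((d:ℝ)/2) (1/2) (r^2) := by
      rw [← himg]
      refine integral_image_eq_integral_abs_deriv_smul measurableSet_Ioo (fun x _ => ?_) ?_ _
      · simpa using (hasDerivAt_pow 2 x).hasDerivWithinAt
      · intro a ha b hb hab
        simp only at hab
        nlinarith [ha.1, hb.1, sq_nonneg (a - b), sq_nonneg (a + b)]
    -- ball volume
    have hΓ1 : 0 < Gamma ((d:ℝ)/2+1) := Real.Gamma_pos_of_pos (by positivity)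
    have hVt : ((volume : Measure E) (Metric.ball 0 1)).toReal
        = √π^d / Gamma ((d:ℝ)/2+1) := by
      rw [show (volume : Measure E) (Metric.ball 0 1)
          = volume (Metric.ball (0 : EuclideanSpace ℝ (Fin d)) 1) from rfl,
        EuclideanSpace.volume_ball (Fin d) 0 1]
      simp only [ENNReal.ofReal_one, one_pow, one_mul, Fintype.card_fin]
      exact ENNReal.toReal_ofReal (div_nonneg (by positivity) hΓ1.le)
    -- final comparison of real integrals
    have hreal : d • ((volume : Measure E) (Metric.ball 0 1)).toReal
          • ∫ r in Set.Ioo 0 (Real.sqrt t), r ^ (d - 1) * f r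
        = ∫ r in Set.Ioo 0 (Real.sqrt t), |2*r| • gammaPDFReal ((d:ℝ)/2) (1/2) (r^2) := by
      rw [hVt, nsmul_eq_mul, smul_eq_mul, ← integral_const_mul, ← integral_const_mul]
      refine setIntegral_congr_fun measurableSet_Ioo fun r hr => ?_
      rw [smul_eq_mul, scal_eq d hd r hr.1]
    rw [step3, step4, step5, hreal, gside, hcov]

lemma gammaPDFReal_integrable {a r : ℝ} (ha : 0 < a) (hr : 0 < r) :
    Integrable (gammaPDFReal a r) := by
  refine ⟨(measurable_gammaPDFReal _ _).aestronglyMeasurable, ?_⟩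
  have h1 : ∫⁻ x, ‖gammaPDFReal a r x‖ₑ = ∫⁻ x, gammaPDF a r x := by
    congr 1
    ext x
    rw [gammaPDF, ← ofReal_norm, Real.norm_eq_abs,
      abs_of_nonneg (gammaPDFReal_nonneg ha hr x)]
  rw [HasFiniteIntegral, h1, lintegral_gammaPDF_eq_one ha hr]
  exact ENNReal.one_lt_top

lemma exists_chiSqCDF_eq (d : ℕ) (hd : 0 < d) (p : ℝ) (hp : p ∈ Set.Ioo (0:ℝ) 1) :
    ∃ x, chiSqCDF d x = p := by
  have hd2 : (0:ℝ) < (d:ℝ)/2 := by positivity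
  haveI : IsProbabilityMeasure (gammaMeasure ((d:ℝ)/2) (1/2)) :=
    isProbabilityMeasure_gammaMeasure hd2 (by norm_num)
  set μ := gammaMeasure ((d:ℝ)/2) (1/2) with hμ
  have hpdfint := gammaPDFReal_integrable hd2 (one_half_pos (α := ℝ))
  have hmono : Monotone (chiSqCDF d) := fun x y hxy => (cdf μ).mono hxy
  have hstep : ∀ x y : ℝ, x ≤ y →
      chiSqCDF d y = chiSqCDF d x + ∫ s in x..y, gammaPDFReal ((d:ℝ)/2) (1/2) s := by
    intro x y hxy
    have h1 : Set.Iic y = Set.Iic x ∪ Set.Ioc x y := (Set.Iic_union_Ioc_eq_Iic hxy).symm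
    have h2 : μ (Set.Iic y) = μ (Set.Iic x) + μ (Set.Ioc x y) := by
      rw [h1, measure_union (by
        simp only [Set.disjoint_left, Set.mem_Iic, Set.mem_Ioc]
        intro a ha h'
        linarith [h'.1]) measurableSet_Ioc]
    have h3 : μ (Set.Ioc x y) = ENNReal.ofReal (∫ s in x..y, gammaPDFReal ((d:ℝ)/2) (1/2) s) := by
      rw [intervalIntegral.integral_of_le hxy, hμ, gammaMeasure,
        withDensity_apply _ measurableSet_Ioc]
      simp_rw [gammaPDF]
      rw [← ofReal_integral_eq_lintegral_ofReal hpdfint.restrict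
        (ae_of_all _ fun s => gammaPDFReal_nonneg hd2 (by norm_num) s)]
    show cdf μ y = cdf μ x + _
    rw [cdf_eq_real, cdf_eq_real, measureReal_def, measureReal_def, h2, h3, ENNReal.toReal_add (measure_ne_top _ _)
      ENNReal.ofReal_ne_top, ENNReal.toReal_ofReal
      (intervalIntegral.integral_nonneg hxy fun s _ => gammaPDFReal_nonneg hd2 (by norm_num) s)]
  have hprim : ∀ y : ℝ, chiSqCDF d y
      = chiSqCDF d 0 + ∫ s in (0:ℝ)..y, gammaPDFReal ((d:ℝ)/2) (1/2) s := by
    intro y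
    rcases le_total (0:ℝ) y with h | h
    · exact hstep 0 y h
    · have := hstep y 0 h
      rw [intervalIntegral.integral_symm]
      linarith [this]
  have hcont : Continuous (chiSqCDF d) := by
    have : Continuous fun y => chiSqCDF d 0 + ∫ s in (0:ℝ)..y, gammaPDFReal ((d:ℝ)/2) (1/2) s :=
      continuous_const.add (intervalIntegral.continuous_primitive
        (fun a b => hpdfint.intervalIntegrable) 0)
    exact this.congr fun y => (hprim y).symm
  have htop : Filter.Tendsto (chiSqCDF d) Filter.atTop (nhds 1) := tendsto_cdf_atTop μ
  have hbot : Filter.Tendsto (chiSqCDF d) Filter.atBot (nhds 0) := tendsto_cdf_atBot μ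
  obtain ⟨a, ha⟩ := (hbot.eventually_lt_const hp.1).exists
  obtain ⟨b, hb⟩ := (htop.eventually_const_lt hp.2).exists
  have hab : a ≤ b := by
    by_contra h
    push_neg at h
    exact absurd (hmono h.le) (by linarith)
  obtain ⟨x, -, hx⟩ := intermediate_value_Icc hab hcont.continuousOn
    (Set.mem_Icc.mpr ⟨ha.le, hb.le⟩)
  exact ⟨x, hx⟩

theorem stmt4 {d : ℕ} (ybar : Fin d → ℝ) (S : Matrix (Fin d) (Fin d) ℝ) (hS : S.PosDef)
    (β : ℝ) (hβ : β ∈ Set.Ioo (0:ℝ) 1)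
    (hcon : ∀ i, ybar i + PsiInv d β * Real.sqrt (S i i) ≤ 0) :
    1 - β ≤ ((mvGaussian ybar S hS) {v | ∀ i, v i ≤ 0}).toReal := by
  have hmapmeas : Measurable fun z : Fin d → ℝ => ybar + (hS.posSemidef.1.eigenvectorUnitary.1 *
      diagonal ((RCLike.ofReal : ℝ → ℝ) ∘ (√·) ∘ hS.posSemidef.1.eigenvalues) *
      (star hS.posSemidef.1.eigenvectorUnitary : Matrix (Fin d) (Fin d) ℝ)).mulVec z := by
    apply Measurable.add measurable_const
    apply measurable_pi_lambda
    intro i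
    simp only [Matrix.mulVec, dotProduct]
    exact Finset.measurable_sum _ fun j _ => (measurable_pi_apply j).const_mul _
  have hsetmeas : MeasurableSet {v : Fin d → ℝ | ∀ i, v i ≤ 0} := by
    have : {v : Fin d → ℝ | ∀ i, v i ≤ 0} = ⋂ i, (fun v : Fin d → ℝ => v i) ⁻¹' Set.Iic 0 := by
      ext v; simp [Set.mem_iInter]
    rw [this]
    exact MeasurableSet.iInter fun i => (measurable_pi_apply i) measurableSet_Iic
  rcases Nat.eq_zero_or_pos d with hd0 | hd
  · subst hd0
    haveI : IsProbabilityMeasure (mvGaussian ybar S hS) := by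
      rw [mvGaussian]
      exact Measure.isProbabilityMeasure_map hmapmeas.aemeasurable
    have huniv : {v : Fin 0 → ℝ | ∀ i, v i ≤ 0} = Set.univ :=
      Set.eq_univ_of_forall fun v i => i.elim0
    rw [huniv, measure_univ, ENNReal.toReal_one]
    linarith [hβ.1]
  · set q := chiSqQuantile d (1 - β) with hqdef
    have hq : chiSqCDF d q = 1 - β :=
      Function.invFun_eq (exists_chiSqCDF_eq d hd (1-β) ⟨by linarith [hβ.2], by linarith [hβ.1]⟩)
    set A := (hS.posSemidef.1.eigenvectorUnitary.1 *
      diagonal ((RCLike.ofReal : ℝ → ℝ) ∘ (√·) ∘ hS.posSemidef.1.eigenvalues) *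
      (star hS.posSemidef.1.eigenvectorUnitary : Matrix (Fin d) (Fin d) ℝ)) with hA
    have hAsym : ∀ i j, A j i = A i j := by
      intro i j
      have hH : A.IsHermitian := by
        rw [hA, star_eq_conjTranspose]
        exact isHermitian_mul_mul_conjTranspose _ (isHermitian_diagonal _)
      simpa using hH.apply i j
    have hAA : ∀ i, ∑ j, A i j ^ 2 = S i i := by
      intro i
      have hmul : A * A = S := by
        have hU : star (hS.posSemidef.1.eigenvectorUnitary : Matrix (Fin d) (Fin d) ℝ) *
            (hS.posSemidef.1.eigenvectorUnitary : Matrix (Fin d) (Fin d) ℝ) = 1 :=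
          hS.posSemidef.1.eigenvectorUnitary.2.1
        conv_rhs => rw [hS.posSemidef.1.spectral_theorem, Unitary.conjStarAlgAut_apply]
        rw [hA]
        simp only [mul_assoc]
        have hD : diagonal ((RCLike.ofReal : ℝ → ℝ) ∘ (√·) ∘ hS.posSemidef.1.eigenvalues) *
            diagonal ((RCLike.ofReal : ℝ → ℝ) ∘ (√·) ∘ hS.posSemidef.1.eigenvalues)
            = diagonal ((RCLike.ofReal : ℝ → ℝ) ∘ hS.posSemidef.1.eigenvalues) := by
          rw [diagonal_mul_diagonal]
          congr 1
          funext k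
          simp [Real.mul_self_sqrt (hS.posSemidef.eigenvalues_nonneg k)]
        rw [← mul_assoc (star _) _ _, hU, one_mul, ← mul_assoc (diagonal _) (diagonal _), hD]
      calc ∑ j, A i j ^ 2 = ∑ j, A i j * A j i :=
            Finset.sum_congr rfl fun j _ => by rw [hAsym i j, sq]
        _ = (A * A) i i := (Matrix.mul_apply).symm
        _ = S i i := by rw [hmul]
    have hsub : {z : Fin d → ℝ | ∑ i, (z i)^2 ≤ q}
        ⊆ (fun z => ybar + A.mulVec z) ⁻¹' {v | ∀ i, v i ≤ 0} := by
      intro z hz i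
      simp only [Set.mem_setOf_eq] at hz
      have hbound : A.mulVec z i ≤ Real.sqrt (S i i) * Real.sqrt q := by
        have hcs : (∑ j, A i j * z j)^2 ≤ (∑ j, A i j ^2) * ∑ j, (z j)^2 :=
          Finset.sum_mul_sq_le_sq_mul_sq _ _ _
        rw [hAA i] at hcs
        have h1 : A.mulVec z i = ∑ j, A i j * z j := rfl
        have h2 : A.mulVec z i ≤ Real.sqrt ((S i i) * ∑ j, (z j)^2) := by
          rw [h1]
          calc ∑ j, A i j * z j ≤ |∑ j, A i j * z j| := le_abs_self _
            _ = Real.sqrt ((∑ j, A i j * z j)^2) := (Real.sqrt_sq_eq_abs _).symm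
            _ ≤ Real.sqrt ((S i i) * ∑ j, (z j)^2) := Real.sqrt_le_sqrt hcs
        calc A.mulVec z i ≤ Real.sqrt ((S i i) * ∑ j, (z j)^2) := h2
          _ = Real.sqrt (S i i) * Real.sqrt (∑ j, (z j)^2) :=
              Real.sqrt_mul (by rw [← hAA i]; positivity) _
          _ ≤ Real.sqrt (S i i) * Real.sqrt q := by
              exact mul_le_mul_of_nonneg_left (Real.sqrt_le_sqrt hz) (Real.sqrt_nonneg _)
      have : ybar i + A.mulVec z i ≤ ybar i + Real.sqrt (S i i) * Real.sqrt q :=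
        add_le_add_right hbound _
      have hP : PsiInv d β = Real.sqrt q := rfl
      have := hcon i
      rw [hP] at this
      show (ybar + A.mulVec z) i ≤ 0
      simp only [Pi.add_apply]
      nlinarith [hbound]
    have hmeasq : MeasurableSet {z : Fin d → ℝ | ∑ i, (z i)^2 ≤ q} :=
      measurableSet_le (by fun_prop) measurable_const
    have hchain : gammaMeasure ((d:ℝ)/2) (1/2) (Set.Iic q)
        ≤ (mvGaussian ybar S hS) {v | ∀ i, v i ≤ 0} := by
      rw [mvGaussian, Measure.map_apply hmapmeas hsetmeas, ← chisq_law d hd q]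
      exact measure_mono hsub
    have hd2 : (0:ℝ) < (d:ℝ)/2 := by positivity
    haveI : IsProbabilityMeasure (gammaMeasure ((d:ℝ)/2) (1/2)) :=
      isProbabilityMeasure_gammaMeasure hd2 (by norm_num)
    haveI : IsProbabilityMeasure (mvGaussian ybar S hS) := by
      rw [mvGaussian]
      exact Measure.isProbabilityMeasure_map hmapmeas.aemeasurable
    have hfin : (mvGaussian ybar S hS) {v | ∀ i, v i ≤ 0} ≠ ⊤ := measure_ne_top _ _
    have h1β : 1 - β = (gammaMeasure ((d:ℝ)/2) (1/2) (Set.Iic q)).toReal := by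
      rw [← hq]
      exact cdf_eq_real _ _
    rw [h1β]
    exact ENNReal.toReal_mono hfin hchain
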